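/- Let Γ ≤ Aff(n) be a subgroup whose translation lattice Λ_Γ is a full lattice in ℝⁿ and whose holonomy F_Γ is finite. Write N = N_{Aff(n)}(Γ) and C = C_{Aff(n)}(Γ). Then F_Γ is a normal subgroup of τ(N), Γ·C is a normal subgroup of N, and τ induces a surjective group homomorphism N/(Γ·C) → τ(N)/F_Γ whose kernel is finite. -/

import Mathlib

/-- `Aff n` is the group of invertible affine transformations of `ℝⁿ`. -/
abbrev Aff (n : ℕ) := (Fin n → ℝ) ≃ᵃ[ℝ] (Fin n → ℝ)

/-- `τ : Aff(n) → GL(n,ℝ)`, sending an affine transformation to its linear part. -/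
noncomputable def tau (n : ℕ) : Aff n →* ((Fin n → ℝ) ≃ₗ[ℝ] (Fin n → ℝ)) :=
  AffineEquiv.linearHom

/-- The translation lattice `Λ_Γ` of a subgroup `Γ ≤ Aff(n)`. -/
def transLattice (n : ℕ) (Γ : Subgroup (Aff n)) : Set (Fin n → ℝ) :=
  {v | AffineEquiv.constVAdd ℝ (Fin n → ℝ) v ∈ Γ}

namespace Stmt5Aux

variable {n : ℕ}

/-- translation by `v` as an element of `Aff n` -/
noncomputable abbrev TT (v : Fin n → ℝ) : Aff n := AffineEquiv.constVAdd ℝ (Fin n → ℝ) v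

lemma tv_apply (v x : Fin n → ℝ) : TT v x = v + x := rfl

lemma tv_mul (v w : Fin n → ℝ) : TT v * TT w = TT (v + w) :=
  AffineEquiv.ext fun x => (add_assoc v w x).symm

lemma tv_inv (v : Fin n → ℝ) : (TT v)⁻¹ = TT (-v) :=
  AffineEquiv.ext fun _ => rfl

lemma tau_tv (v : Fin n → ℝ) : tau n (TT v) = 1 := rfl

lemma aff_apply_add (g : Aff n) (v x : Fin n → ℝ) :
    g (v + x) = tau n g v + g x := g.map_vadd x v

lemma eq_tv_of_tau_eq_one {e : Aff n} (he : tau n e = 1) : e = TT (e 0) := by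
  refine AffineEquiv.ext fun x => ?_
  have := aff_apply_add e x 0
  rw [add_zero, he] at this
  have h2 : e x = x + e 0 := by simpa using this
  rw [tv_apply, h2, add_comm]

variable (Γ : Subgroup (Aff n))

/-- the translation lattice as an `AddSubgroup`. -/
noncomputable def Lam : AddSubgroup (Fin n → ℝ) where
  carrier := transLattice n Γ
  zero_mem' := by
    show TT (0 : Fin n → ℝ) ∈ Γ
    have : TT (0 : Fin n → ℝ) = 1 := AffineEquiv.ext fun x => zero_add x
    rw [this]; exact one_mem Γ
  add_mem' {a b} ha hb := by
    show TT (a + b) ∈ Γ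
    rw [← tv_mul]; exact mul_mem ha hb
  neg_mem' {a} ha := by
    show TT (-a) ∈ Γ
    rw [← tv_inv]; exact inv_mem ha

lemma mem_Lam_iff (v : Fin n → ℝ) : v ∈ Lam Γ ↔ TT v ∈ Γ := Iff.rfl

/-- the subspace fixed by the holonomy. -/
def Fix : Submodule ℝ (Fin n → ℝ) where
  carrier := {v | ∀ γ ∈ Γ, tau n γ v = v}
  zero_mem' := fun γ _ => map_zero (tau n γ)
  add_mem' {a b} ha hb := fun γ hγ => by
    rw [map_add, ha γ hγ, hb γ hγ]
  smul_mem' c a ha := fun γ hγ => by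
    rw [map_smul, ha γ hγ]

/-- `S = Λ + Fix`. -/
noncomputable def SS : AddSubgroup (Fin n → ℝ) := Lam Γ ⊔ (Fix Γ).toAddSubgroup

lemma conj_tv (g : Aff n) (v : Fin n → ℝ) : g * TT v * g⁻¹ = TT (tau n g v) := by
  refine AffineEquiv.ext fun x => ?_
  show g (v + g⁻¹ x) = tau n g v + x
  rw [aff_apply_add]
  congr 1
  exact g.apply_symm_apply x

lemma tv_mem_centralizer {v : Fin n → ℝ} (hv : v ∈ Fix Γ) :
    TT v ∈ Subgroup.centralizer (Γ : Set (Aff n)) := by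
  rw [Subgroup.mem_centralizer_iff]
  intro g hg
  refine AffineEquiv.ext fun x => ?_
  show g (v + x) = v + g x
  rw [aff_apply_add, hv g hg]

lemma tau_eq_one_of_mem_centralizer
    (hspan : Submodule.span ℝ (transLattice n Γ) = ⊤)
    {c : Aff n} (hc : c ∈ Subgroup.centralizer (Γ : Set (Aff n))) :
    tau n c = 1 := by
  have key : ∀ v ∈ transLattice n Γ, tau n c v = v := by
    intro v hv
    have hcomm := Subgroup.mem_centralizer_iff.mp hc (TT v) hv
    have := congrArg (fun e : Aff n => e 0) hcomm
    have h1 : (TT v * c) 0 = v + c 0 := rfl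
    have h2 : (c * TT v) 0 = tau n c v + c 0 := aff_apply_add c v 0
    rw [h1, h2] at this
    exact (add_right_cancel this).symm
  -- extend to all of space by span
  have : ∀ v : Fin n → ℝ, tau n c v = v := by
    intro v
    have hv : v ∈ Submodule.span ℝ (transLattice n Γ) := by rw [hspan]; trivial
    induction hv using Submodule.span_induction with
    | mem x hx => exact key x hx
    | zero => exact map_zero _
    | add x y _ _ hx hy => rw [map_add, hx, hy]
    | smul c' x _ hx => rw [map_smul, hx]
  exact LinearEquiv.toLinearMap_injective (LinearMap.ext this)

/-- the image `τ(Γ⊔C) ≤ τ(Γ)`. -/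
lemma map_sup_le (hspan : Submodule.span ℝ (transLattice n Γ) = ⊤) :
    (Γ ⊔ Subgroup.centralizer (Γ : Set (Aff n))).map (tau n) ≤ Γ.map (tau n) := by
  rw [Subgroup.map_sup]
  refine sup_le le_rfl ?_
  rintro x ⟨c, hc, rfl⟩
  rw [tau_eq_one_of_mem_centralizer Γ hspan hc]
  exact one_mem _

lemma sup_le_normalizer :
    Γ ⊔ Subgroup.centralizer (Γ : Set (Aff n)) ≤ (Subgroup.normalizer (Γ : Set (Aff n))) := by
  refine sup_le Subgroup.le_normalizer ?_
  intro c hc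
  rw [Subgroup.mem_normalizer_iff]
  intro h
  have : ∀ x ∈ Γ, c * x * c⁻¹ = x := by
    intro x hx
    have := Subgroup.mem_centralizer_iff.mp hc x hx
    group
    rw [← this]
    group
  constructor
  · intro hh; rw [this h hh]; exact hh
  · intro hh
    have hcomm := Subgroup.mem_centralizer_iff.mp (inv_mem hc) _ hh
    have h2 : h = c * h * c⁻¹ := by
      calc h = c⁻¹ * (c * h * c⁻¹) * c := by group
        _ = (c * h * c⁻¹) * c⁻¹ * c := by rw [← hcomm, mul_assoc]
        _ = c * h * c⁻¹ := by group
    rw [h2]; exact hh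

/-- conjugation by an element of the normalizer preserves `Γ ⊔ C`. -/
lemma conj_mem_sup {g : Aff n} (hg : g ∈ (Subgroup.normalizer (Γ : Set (Aff n)))) {x : Aff n}
    (hx : x ∈ Γ ⊔ Subgroup.centralizer (Γ : Set (Aff n))) :
    g * x * g⁻¹ ∈ Γ ⊔ Subgroup.centralizer (Γ : Set (Aff n)) := by
  have hginv : ∀ h ∈ Γ, g⁻¹ * h * g ∈ Γ := by
    intro h hh
    refine (Subgroup.mem_normalizer_iff.mp hg (g⁻¹ * h * g)).mpr ?_
    have : g * (g⁻¹ * h * g) * g⁻¹ = h := by group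
    rw [this]; exact hh
  have hmem : g * x * g⁻¹ ∈ (Γ ⊔ Subgroup.centralizer (Γ : Set (Aff n))).map
      (MulAut.conj g).toMonoidHom :=
    Subgroup.mem_map_of_mem _ hx
  rw [Subgroup.map_sup] at hmem
  refine SetLike.le_def.mp (sup_le ?_ ?_) hmem
  · rintro _ ⟨γ, hγ, rfl⟩
    refine Subgroup.mem_sup_left ?_
    simpa using (Subgroup.mem_normalizer_iff.mp hg γ).mp hγ
  · rintro _ ⟨c, hc, rfl⟩
    refine Subgroup.mem_sup_right ?_
    rw [Subgroup.mem_centralizer_iff]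
    intro h hh
    have hc' := Subgroup.mem_centralizer_iff.mp hc _ (hginv h hh)
    simp only [MulEquiv.coe_toMonoidHom, MulAut.conj_apply]
    calc h * (g * c * g⁻¹) = g * ((g⁻¹ * h * g) * c) * g⁻¹ := by group
      _ = g * (c * (g⁻¹ * h * g)) * g⁻¹ := by rw [hc']
      _ = g * c * g⁻¹ * h := by group

lemma normal2 :
    ((Γ.map (tau n)).subgroupOf ((Subgroup.normalizer (Γ : Set (Aff n))).map (tau n))).Normal := by
  constructor
  rintro x hx g
  rw [Subgroup.mem_subgroupOf] at hx ⊢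
  obtain ⟨γ, hγ, hγx⟩ := hx
  obtain ⟨h, hh, hhg⟩ := g.2
  push_cast
  rw [← hγx, ← hhg, ← map_inv, ← map_mul, ← map_mul]
  exact ⟨h * γ * h⁻¹, (Subgroup.mem_normalizer_iff.mp hh γ).mp hγ, rfl⟩

lemma normal4 :
    ((Γ ⊔ Subgroup.centralizer (Γ : Set (Aff n))).subgroupOf (Subgroup.normalizer (Γ : Set (Aff n)))).Normal := by
  constructor
  rintro x hx g
  rw [Subgroup.mem_subgroupOf] at hx ⊢
  push_cast
  exact conj_mem_sup Γ g.2 hx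


lemma tv_mem_sup {u : Fin n → ℝ} (hu : u ∈ SS Γ) :
    TT u ∈ Γ ⊔ Subgroup.centralizer (Γ : Set (Aff n)) := by
  obtain ⟨a, ha, b, hb, rfl⟩ := AddSubgroup.mem_sup.mp hu
  rw [← tv_mul]
  exact mul_mem (Subgroup.mem_sup_left ha)
    (Subgroup.mem_sup_right (tv_mem_centralizer Γ hb))

lemma sub_tau_mem_Lam {v : Fin n → ℝ} (hv : TT v ∈ (Subgroup.normalizer (Γ : Set (Aff n))))
    {γ : Aff n} (hγ : γ ∈ Γ) : v - tau n γ v ∈ Lam Γ := by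
  have h1 : TT v * γ * (TT v)⁻¹ ∈ Γ := (Subgroup.mem_normalizer_iff.mp hv γ).mp hγ
  have key : TT v * γ * (TT v)⁻¹ * γ⁻¹ = TT (v - tau n γ v) := by
    rw [tv_inv]
    refine AffineEquiv.ext fun x => ?_
    show v + γ (-v + γ⁻¹ x) = v - tau n γ v + x
    rw [aff_apply_add, map_neg]
    have hx : γ (γ⁻¹ x) = x := γ.apply_symm_apply x
    rw [hx]
    show v + (-(tau n γ v) + x) = v - tau n γ v + x
    abel
  rw [mem_Lam_iff, ← key]
  exact mul_mem h1 (inv_mem hγ)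

/-- order of the holonomy group -/
noncomputable def mm : ℕ := Nat.card ↥(Γ.map (tau n))

/-- the auxiliary additive hom `Λ → ℝⁿ/S`, `w ↦ (1/m) w mod S`. -/
noncomputable def hh : ↥(Lam Γ) →+ (Fin n → ℝ) ⧸ SS Γ :=
  (QuotientAddGroup.mk' (SS Γ)).comp
    (((LinearMap.lsmul ℝ (Fin n → ℝ) ((mm Γ : ℝ)⁻¹)).toAddMonoidHom).comp
      (Lam Γ).subtype)

lemma hh_apply (w : ↥(Lam Γ)) :
    hh Γ w = QuotientAddGroup.mk ((mm Γ : ℝ)⁻¹ • (w : Fin n → ℝ)) := rfl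

lemma mm_pos (hfin : Finite ↥(Γ.map (tau n))) : 0 < mm Γ := Nat.card_pos

lemma mk_mem_hh_range (hfin : Finite ↥(Γ.map (tau n)))
    {v : Fin n → ℝ} (hv : TT v ∈ (Subgroup.normalizer (Γ : Set (Aff n)))) :
    (QuotientAddGroup.mk v : (Fin n → ℝ) ⧸ SS Γ) ∈ (hh Γ).range := by
  classical
  have := Fintype.ofFinite ↥(Γ.map (tau n))
  set F := Γ.map (tau n) with hF
  set a : Fin n → ℝ := ∑ A : ↥F, (v - (A : (Fin n → ℝ) ≃ₗ[ℝ] (Fin n → ℝ)) v) with ha_def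
  set b : Fin n → ℝ := ∑ A : ↥F, (A : (Fin n → ℝ) ≃ₗ[ℝ] (Fin n → ℝ)) v with hb_def
  have ha : a ∈ Lam Γ := by
    refine AddSubgroup.sum_mem _ fun A _ => ?_
    obtain ⟨γ, hγ, hγA⟩ := A.2
    rw [← hγA]
    exact sub_tau_mem_Lam Γ hv hγ
  have hb : b ∈ Fix Γ := by
    intro γ hγ
    rw [hb_def, map_sum]
    refine Fintype.sum_equiv (Equiv.mulLeft (⟨tau n γ, Subgroup.mem_map_of_mem _ hγ⟩ : ↥F))
      _ _ fun A => rfl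
  have hab : a + b = (mm Γ : ℝ) • v := by
    rw [ha_def, hb_def, ← Finset.sum_add_distrib]
    simp only [sub_add_cancel]
    rw [Finset.sum_const, Finset.card_univ, ← Nat.cast_smul_eq_nsmul ℝ, mm,
      Nat.card_eq_fintype_card]
  have hm0 : (mm Γ : ℝ) ≠ 0 := Nat.cast_ne_zero.mpr (mm_pos Γ hfin).ne'
  refine ⟨⟨a, ha⟩, ?_⟩
  rw [hh_apply]
  rw [QuotientAddGroup.eq_iff_sub_mem]
  have : (mm Γ : ℝ)⁻¹ • (a : Fin n → ℝ) - v = -((mm Γ : ℝ)⁻¹ • b) := by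
    have : v = (mm Γ : ℝ)⁻¹ • (a + b) := by
      rw [hab, smul_smul, inv_mul_cancel₀ hm0, one_smul]
    rw [this, smul_add]
    abel
  rw [this]
  refine neg_mem (AddSubgroup.mem_sup_right ?_)
  exact Submodule.smul_mem _ _ hb

lemma hh_range_finite (hdisc : DiscreteTopology ↥(transLattice n Γ))
    (hspan : Submodule.span ℝ (transLattice n Γ) = ⊤)
    (hfin : Finite ↥(Γ.map (tau n))) :
    Finite ↥(hh Γ).range := by
  set L : Submodule ℤ (Fin n → ℝ) := AddSubgroup.toIntSubmodule (Lam Γ) with hL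
  have hdisc' : DiscreteTopology ↥L := hdisc
  have hzl : IsZLattice ℝ L := ⟨by rw [AddSubgroup.coe_toIntSubmodule]; exact hspan⟩
  have hmf : Module.Finite ℤ ↥L := ZLattice.module_finite ℝ L
  have hfg : AddGroup.FG ↥(Lam Γ) := Module.Finite.iff_addGroup_fg.mp hmf
  have hfgr : AddGroup.FG ↥(hh Γ).range :=
    AddGroup.fg_of_surjective (hh Γ).rangeRestrict_surjective
  refine AddCommGroup.finite_of_fg_torsion _ ?_
  intro x
  obtain ⟨w, hw⟩ := x.2
  rw [isOfFinAddOrder_iff_nsmul_eq_zero]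
  refine ⟨mm Γ, mm_pos Γ hfin, ?_⟩
  have hm0 : (mm Γ : ℝ) ≠ 0 := Nat.cast_ne_zero.mpr (mm_pos Γ hfin).ne'
  apply Subtype.ext
  show mm Γ • (x : (Fin n → ℝ) ⧸ SS Γ) = 0
  have hnat : (mm Γ) • (QuotientAddGroup.mk ((mm Γ : ℝ)⁻¹ • (w : Fin n → ℝ)) :
      (Fin n → ℝ) ⧸ SS Γ) = QuotientAddGroup.mk (mm Γ • (mm Γ : ℝ)⁻¹ • (w : Fin n → ℝ)) :=
    (map_nsmul (QuotientAddGroup.mk' (SS Γ)) _ _).symm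
  rw [← hw, hh_apply, hnat, ← Nat.cast_smul_eq_nsmul ℝ, smul_smul, mul_inv_cancel₀ hm0,
    one_smul]
  exact (QuotientAddGroup.eq_zero_iff _).mpr (AddSubgroup.mem_sup_left w.2)


end Stmt5Aux


open Stmt5Aux

/-- Let `Γ ≤ Aff(n)` have full translation lattice and finite holonomy
`F_Γ = τ(Γ)`, and write `N = N_{Aff(n)}(Γ)`, `C = C_{Aff(n)}(Γ)`.  Then `F_Γ` is a normal
subgroup of `τ(N)`, `Γ·C` is a normal subgroup of `N`, and `τ` induces a surjective group
homomorphism `N/(Γ·C) → τ(N)/F_Γ` with finite kernel.  (The last clause is stated under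
instance binders recording the two normality claims, which are themselves asserted.) -/
theorem stmt5 (n : ℕ) (Γ : Subgroup (Aff n))
    (hdisc : DiscreteTopology ↥(transLattice n Γ))
    (hspan : Submodule.span ℝ (transLattice n Γ) = ⊤)
    (hfin : Finite ↥(Γ.map (tau n))) :
    Γ.map (tau n) ≤ (Subgroup.normalizer (Γ : Set (Aff n))).map (tau n) ∧
    ((Γ.map (tau n)).subgroupOf ((Subgroup.normalizer (Γ : Set (Aff n))).map (tau n))).Normal ∧
    Γ ⊔ Subgroup.centralizer (Γ : Set (Aff n)) ≤ (Subgroup.normalizer (Γ : Set (Aff n))) ∧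
    ((Γ ⊔ Subgroup.centralizer (Γ : Set (Aff n))).subgroupOf (Subgroup.normalizer (Γ : Set (Aff n)))).Normal ∧
    ∀ [_h1 : ((Γ ⊔ Subgroup.centralizer (Γ : Set (Aff n))).subgroupOf (Subgroup.normalizer (Γ : Set (Aff n)))).Normal]
      [_h2 : ((Γ.map (tau n)).subgroupOf ((Subgroup.normalizer (Γ : Set (Aff n))).map (tau n))).Normal],
      ∃ φ : (↥(Subgroup.normalizer (Γ : Set (Aff n))) ⧸ (Γ ⊔ Subgroup.centralizer (Γ : Set (Aff n))).subgroupOf (Subgroup.normalizer (Γ : Set (Aff n))))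
            →* (↥((Subgroup.normalizer (Γ : Set (Aff n))).map (tau n)) ⧸ (Γ.map (tau n)).subgroupOf ((Subgroup.normalizer (Γ : Set (Aff n))).map (tau n))),
        Function.Surjective φ ∧ Finite ↥φ.ker ∧
        ∀ g : ↥(Subgroup.normalizer (Γ : Set (Aff n))),
          φ (QuotientGroup.mk g) =
            QuotientGroup.mk ⟨tau n ↑g, Subgroup.mem_map_of_mem (tau n) g.2⟩ := by
  classical
  refine ⟨Subgroup.map_mono Subgroup.le_normalizer, normal2 Γ, sup_le_normalizer Γ,
    normal4 Γ, ?_⟩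
  intro _h1 _h2
  set C := Subgroup.centralizer (Γ : Set (Aff n)) with hC
  set N := (Subgroup.normalizer (Γ : Set (Aff n))) with hN
  set ψ : ↥N →* (↥(N.map (tau n)) ⧸ (Γ.map (tau n)).subgroupOf (N.map (tau n))) :=
    (QuotientGroup.mk' ((Γ.map (tau n)).subgroupOf (N.map (tau n)))).comp
      ((tau n).subgroupMap N) with hψ
  have hψval : ∀ x : ↥N, (((tau n).subgroupMap N x : ↥(N.map (tau n))) :
      (Fin n → ℝ) ≃ₗ[ℝ] (Fin n → ℝ)) = tau n ↑x := fun _ => rfl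
  have hker : (Γ ⊔ C).subgroupOf N ≤ ψ.ker := by
    intro x hx
    rw [Subgroup.mem_subgroupOf] at hx
    show ψ x = 1
    rw [hψ, MonoidHom.comp_apply, QuotientGroup.mk'_apply, QuotientGroup.eq_one_iff,
      Subgroup.mem_subgroupOf, hψval x]
    exact map_sup_le Γ hspan (Subgroup.mem_map_of_mem _ hx)
  refine ⟨QuotientGroup.lift _ ψ hker, ?_, ?_, fun g => rfl⟩
  · -- surjectivity
    intro q
    obtain ⟨y, rfl⟩ := QuotientGroup.mk_surjective q
    obtain ⟨g, hg, hgy⟩ := y.2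
    refine ⟨QuotientGroup.mk ⟨g, hg⟩, ?_⟩
    rw [QuotientGroup.lift_mk]
    show QuotientGroup.mk _ = QuotientGroup.mk y
    congr 1
    exact Subtype.ext hgy
  · -- kernel finiteness
    set φ := QuotientGroup.lift _ ψ hker with hφ
    choose rep hrep using fun k : ↥φ.ker => QuotientGroup.mk_surjective k.1
    have htau : ∀ k, ∃ γ : Aff n, γ ∈ Γ ∧ tau n γ = tau n ↑(rep k) := by
      intro k
      have hk : φ ↑k = 1 := k.2
      rw [← hrep k, hφ, QuotientGroup.lift_mk, hψ, MonoidHom.comp_apply,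
        QuotientGroup.mk'_apply, QuotientGroup.eq_one_iff, Subgroup.mem_subgroupOf,
        hψval] at hk
      obtain ⟨γ, hγ, hγe⟩ := hk
      exact ⟨γ, hγ, hγe⟩
    choose gam hgamΓ hgamtau using htau
    set vv : ↥φ.ker → (Fin n → ℝ) := fun k => ((↑(rep k) : Aff n) * (gam k)⁻¹) 0 with hvv
    have htv : ∀ k, TT (vv k) = (↑(rep k) : Aff n) * (gam k)⁻¹ := by
      intro k
      refine (eq_tv_of_tau_eq_one ?_).symm
      rw [map_mul, map_inv, ← hgamtau k, mul_inv_cancel]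
    have hvN : ∀ k, TT (vv k) ∈ N := by
      intro k
      rw [htv k]
      exact mul_mem (rep k).2 (inv_mem (Subgroup.le_normalizer (hgamΓ k)))
    have hinj : Function.Injective (fun k : ↥φ.ker =>
        (⟨QuotientAddGroup.mk (vv k), mk_mem_hh_range Γ hfin (hvN k)⟩ : ↥(hh Γ).range)) := by
      intro k₁ k₂ hk
      have h12 : vv k₁ - vv k₂ ∈ SS Γ :=
        (QuotientAddGroup.eq_iff_sub_mem).mp (congrArg Subtype.val hk)
      have hT : TT (vv k₁) * (TT (vv k₂))⁻¹ ∈ Γ ⊔ C := by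
        rw [tv_inv, tv_mul, ← sub_eq_add_neg]
        exact tv_mem_sup Γ h12
      rw [htv k₁, htv k₂] at hT
      have hy : (↑(rep k₁) : Aff n) * ((gam k₁)⁻¹ * gam k₂) * (↑(rep k₂) : Aff n)⁻¹ ∈ Γ ⊔ C := by
        have hid : (↑(rep k₁) : Aff n) * (gam k₁)⁻¹ * ((↑(rep k₂) : Aff n) * (gam k₂)⁻¹)⁻¹
            = (↑(rep k₁) : Aff n) * ((gam k₁)⁻¹ * gam k₂) * (↑(rep k₂) : Aff n)⁻¹ := by group
        rw [hid] at hT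
        exact hT
      have hfinal : (↑(rep k₁) : Aff n)⁻¹ * ↑(rep k₂) ∈ Γ ⊔ C := by
        have hid2 : (↑(rep k₁) : Aff n)⁻¹ * ↑(rep k₂)
            = ((gam k₁)⁻¹ * gam k₂) *
              ((↑(rep k₂) : Aff n)⁻¹ *
                ((↑(rep k₁) : Aff n) * ((gam k₁)⁻¹ * gam k₂) * (↑(rep k₂) : Aff n)⁻¹)⁻¹ *
                ((↑(rep k₂) : Aff n)⁻¹)⁻¹) := by group
        rw [hid2]
        refine mul_mem (Subgroup.mem_sup_left (mul_mem (inv_mem (hgamΓ k₁)) (hgamΓ k₂))) ?_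
        exact conj_mem_sup Γ (inv_mem (rep k₂).2) (inv_mem hy)
      have hq : (QuotientGroup.mk (rep k₁) : ↥N ⧸ (Γ ⊔ C).subgroupOf N) = QuotientGroup.mk (rep k₂) := by
        rw [QuotientGroup.eq, Subgroup.mem_subgroupOf]
        push_cast
        exact hfinal
      apply Subtype.ext
      rw [← hrep k₁, ← hrep k₂, hq]
    have := hh_range_finite Γ hdisc hspan hfin
    exact Finite.of_injective _ hinj
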